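/- Let F be a finite field, n ≥ 1, and let C be a linear code, i.e., an F-linear subspace of F^n with coordinates indexed by {0, 1, ..., n-1}. Let S ⊆ {1, ..., n-1}. Then the following are equivalent: (i) any two codewords of C that agree on all coordinates in S also agree on coordinate 0 (i.e., the shares at positions in S determine the share at position 0); (ii) there exists a vector v in the dual code C⊥ with v_0 = 1 and supp(v) ⊆ {0} ∪ S. -/

import Mathlib

/-- Massey secret sharing: the shares at positions in `S` determine the secret
(coordinate `0`) iff there is a dual codeword `v` with `v 0 = 1` and
`supp v ⊆ {0} ∪ S`. -/
theorem stmt_0 (F : Type*) [Field F] [Fintype F] (n : ℕ) (hn : 1 ≤ n)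
    (C : Submodule F (Fin n → F)) (S : Set (Fin n)) (hS : (⟨0, hn⟩ : Fin n) ∉ S) :
    (∀ c ∈ C, ∀ c' ∈ C, (∀ i ∈ S, c i = c' i) → c ⟨0, hn⟩ = c' ⟨0, hn⟩) ↔
      (∃ v : Fin n → F, (∀ c ∈ C, ∑ i, v i * c i = 0) ∧ v ⟨0, hn⟩ = 1 ∧
        ∀ i, v i ≠ 0 → i = (⟨0, hn⟩ : Fin n) ∨ i ∈ S) := by
  set e0 : Fin n := ⟨0, hn⟩ with he0
  constructor
  · intro h
    -- functionals on C
    classical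
    haveI : Finite S := Subtype.finite
    set L : S → C →ₗ[F] F := fun i =>
      { toFun := fun c => (c : Fin n → F) i
        map_add' := fun a b => rfl
        map_smul' := fun m a => rfl } with hL
    set K : C →ₗ[F] F :=
      { toFun := fun c => (c : Fin n → F) e0
        map_add' := fun a b => rfl
        map_smul' := fun m a => rfl } with hK
    have hker : ⨅ i, LinearMap.ker (L i) ≤ LinearMap.ker K := by
      intro c hc
      simp only [Submodule.mem_iInf, LinearMap.mem_ker] at hc ⊢
      have := h c c.2 0 C.zero_mem (fun i hi => by
        simpa [hL] using hc ⟨i, hi⟩)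
      simpa [hK] using this
    have hspan := mem_span_of_iInf_ker_le_ker hker
    obtain ⟨a, ha⟩ := (Submodule.mem_span_range_iff_exists_fun F).1 hspan
    refine ⟨fun j => if j = e0 then 1 else if hj : j ∈ S then -a ⟨j, hj⟩ else 0, ?_, by simp, ?_⟩
    · intro c hc
      have hKc : ∑ i : S, a i * c i = c e0 := by
        have := congrArg (fun f => f ⟨c, hc⟩) ha
        simpa [hL, hK, Finset.sum_apply, smul_eq_mul] using this
      have hnot : ∀ j ∈ (Finset.univ : Finset (Fin n)) \ insert e0 S.toFinset,
          (if j = e0 then 1 else if hj : j ∈ S then -a ⟨j, hj⟩ else 0) * c j = 0 := by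
        intro j hj
        simp only [Finset.mem_sdiff, Finset.mem_insert, Set.mem_toFinset] at hj
        rcases hj with ⟨-, hj⟩
        push_neg at hj
        simp [hj.1, hj.2]
      rw [← Finset.sum_subset (Finset.subset_univ (insert e0 S.toFinset))
        (fun j _ hj => hnot j (Finset.mem_sdiff.2 ⟨Finset.mem_univ j, hj⟩))]
      rw [Finset.sum_insert (by simpa using hS)]
      have key : ∑ j ∈ S.toFinset,
          (if j = e0 then 1 else if hj : j ∈ S then -a ⟨j, hj⟩ else 0) * c j
          = ∑ i : S, -(a i * c i) := by
        rw [Finset.sum_subtype S.toFinset (fun x => Set.mem_toFinset)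
          (fun j => (if j = e0 then 1 else if hj : j ∈ S then -a ⟨j, hj⟩ else 0) * c j)]
        refine Finset.sum_congr rfl fun i _ => ?_
        have hne : (i : Fin n) ≠ e0 := fun h => hS (h ▸ i.2)
        simp [hne, i.2, neg_mul]
      rw [key, if_pos rfl, one_mul, Finset.sum_neg_distrib, hKc, add_neg_cancel]
    · intro i hi
      by_contra hcon
      push_neg at hcon
      simp [hcon.1, hcon.2] at hi
  · rintro ⟨v, hv, hv0, hsupp⟩ c hc c' hc' hag
    have h1 : ∑ i, v i * c i = 0 := hv c hc
    have h2 : ∑ i, v i * c' i = 0 := hv c' hc'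
    have h3 : ∑ i, v i * (c i - c' i) = 0 := by
      simp only [mul_sub, Finset.sum_sub_distrib, h1, h2, sub_zero]
    have h4 : ∑ i, v i * (c i - c' i) = v e0 * (c e0 - c' e0) := by
      rw [← Finset.sum_subset (Finset.subset_univ {e0})]
      · simp
      · intro j _ hj
        simp only [Finset.mem_singleton] at hj
        rcases eq_or_ne (v j) 0 with h | h
        · simp [h]
        · rcases hsupp j h with h' | h'
          · exact absurd h' hj
          · simp [hag j h']
    rw [h4, hv0, one_mul, sub_eq_zero] at h3
    exact h3
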